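/- Let G be an unmixed bipartite graph on {x_1,...,x_n} ∪ {y_1,...,y_n} with {x_i,y_i} ∈ E(G) for all i. If C and C' are minimal vertex covers with C̄ = {i : x_i ∈ C} and C̄' = {i : x_i ∈ C'}, then the set {x_i : i ∈ C̄ ∪ C̄'} ∪ {y_j : j ∉ C̄ ∪ C̄'} is also a minimal vertex cover of G. -/
import Mathlib


open Finset

/-- `C` is a vertex cover of the graph `G`. -/
def IsVC {α : Type*} (G : SimpleGraph α) (C : Finset α) : Prop :=
  ∀ ⦃u v : α⦄, G.Adj u v → u ∈ C ∨ v ∈ C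

/-- `C` is a minimal vertex cover of the graph `G`. -/
def IsMinVC {α : Type*} (G : SimpleGraph α) (C : Finset α) : Prop :=
  IsVC G C ∧ ∀ C' ⊂ C, ¬ IsVC G C'

/-- `G` is unmixed: all minimal vertex covers have the same cardinality. -/
def Unmixed {α : Type*} (G : SimpleGraph α) : Prop :=
  ∀ C C' : Finset α, IsMinVC G C → IsMinVC G C' → C.card = C'.card

/-- `G` is bipartite with respect to the given sum decomposition of its vertex set:
all edges go between the two parts. -/
def Bip {m n : ℕ} (G : SimpleGraph (Fin m ⊕ Fin n)) : Prop :=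
  (∀ i j, ¬ G.Adj (Sum.inl i) (Sum.inl j)) ∧ ∀ i j, ¬ G.Adj (Sum.inr i) (Sum.inr j)

/-- the set `{x_i : i ∈ S} ∪ {y_j : j ∉ S}`, where `x_i = Sum.inl i`, `y_j = Sum.inr j`. -/
def coverOf {n : ℕ} (S : Finset (Fin n)) : Finset (Fin n ⊕ Fin n) :=
  S.image Sum.inl ∪ Sᶜ.image Sum.inr

/-- the "x-part" `C̄ = {i : x_i ∈ C}` of a set of vertices `C`. -/
def xpart {n : ℕ} (C : Finset (Fin n ⊕ Fin n)) : Finset (Fin n) :=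
  Finset.univ.filter fun i => Sum.inl i ∈ C

lemma mem_coverOf_inl {n : ℕ} (S : Finset (Fin n)) (i : Fin n) :
    Sum.inl i ∈ coverOf S ↔ i ∈ S := by simp [coverOf]

lemma mem_coverOf_inr {n : ℕ} (S : Finset (Fin n)) (j : Fin n) :
    Sum.inr j ∈ coverOf S ↔ j ∉ S := by simp [coverOf]

lemma card_coverOf {n : ℕ} (S : Finset (Fin n)) : (coverOf S).card = n := by
  rw [coverOf, card_union_of_disjoint (by simp [Finset.disjoint_left]),
    card_image_of_injective _ Sum.inl_injective,
    card_image_of_injective _ Sum.inr_injective, card_add_card_compl, Fintype.card_fin]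

lemma card_ge_of_VC {n : ℕ} (G : SimpleGraph (Fin n ⊕ Fin n))
    (hmatch : ∀ i, G.Adj (Sum.inl i) (Sum.inr i))
    (C : Finset (Fin n ⊕ Fin n)) (hC : IsVC G C) : n ≤ C.card := by
  have := Finset.card_le_card_of_injOn
    (f := fun i => if Sum.inl i ∈ C then (Sum.inl i : Fin n ⊕ Fin n) else Sum.inr i)
    (s := (univ : Finset (Fin n))) (t := C) ?_ ?_
  · simpa using this
  · intro i _
    by_cases h : Sum.inl i ∈ C
    · simpa [h]
    · simp only [h, if_false]
      rcases hC (hmatch i) with h' | h'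
      · exact absurd h' h
      · exact h'
  · intro a _ b _ hab
    dsimp at hab
    split_ifs at hab <;> simp_all

lemma not_both {n : ℕ} (G : SimpleGraph (Fin n ⊕ Fin n))
    (hmatch : ∀ i, G.Adj (Sum.inl i) (Sum.inr i))
    (C : Finset (Fin n ⊕ Fin n)) (hC : IsVC G C) (hcard : C.card = n)
    (j : Fin n) (h1 : Sum.inl j ∈ C) : Sum.inr j ∉ C := by
  intro h2
  set g : Fin n → (Fin n ⊕ Fin n) :=
    fun i => if Sum.inl i ∈ C then (Sum.inl i : Fin n ⊕ Fin n) else Sum.inr i with hg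
  have hsub : insert (Sum.inr j) ((univ : Finset (Fin n)).image g) ⊆ C := by
    intro x hx
    rcases Finset.mem_insert.1 hx with rfl | hx
    · exact h2
    · obtain ⟨i, _, rfl⟩ := Finset.mem_image.1 hx
      by_cases h : Sum.inl i ∈ C
      · simpa [hg, h]
      · simp only [hg, h, if_false]
        rcases hC (hmatch i) with h' | h'
        · exact absurd h' h
        · exact h'
  have hinj : Set.InjOn g (univ : Finset (Fin n)) := by
    intro a _ b _ hab
    simp only [hg] at hab
    split_ifs at hab <;> simp_all
  have hni : Sum.inr j ∉ (univ : Finset (Fin n)).image g := by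
    simp only [Finset.mem_image, not_exists]
    rintro i ⟨_, hgi⟩
    by_cases h : Sum.inl i ∈ C
    · simp [hg, h] at hgi
    · simp only [hg, h, if_false, Sum.inr.injEq] at hgi
      subst hgi
      exact h h1
  have hc1 : (insert (Sum.inr j) ((univ : Finset (Fin n)).image g)).card = n + 1 := by
    rw [Finset.card_insert_of_notMem hni, Finset.card_image_of_injOn hinj, card_univ,
      Fintype.card_fin]
  have := Finset.card_le_card hsub
  omega

lemma minVC_card {n : ℕ} (G : SimpleGraph (Fin n ⊕ Fin n)) (hbip : Bip G)
    (hmatch : ∀ i, G.Adj (Sum.inl i) (Sum.inr i)) (hunm : Unmixed G)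
    (C : Finset (Fin n ⊕ Fin n)) (hC : IsMinVC G C) : C.card = n := by
  have hY : IsMinVC G (coverOf (∅ : Finset (Fin n))) := by
    constructor
    · intro u v huv
      cases u with
      | inl i => cases v with
        | inl j => exact absurd huv (hbip.1 _ _)
        | inr j => right; simp [mem_coverOf_inr]
      | inr i => cases v with
        | inl j => left; simp [mem_coverOf_inr]
        | inr j => exact absurd huv (hbip.2 _ _)
    · intro D hD hDvc
      have h1 := card_ge_of_VC G hmatch D hDvc
      have h2 := Finset.card_lt_card hD
      rw [card_coverOf] at h2; omega
  have := hunm C _ hC hY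
  rwa [card_coverOf] at this

/-- unions: if `C`, `C'` are minimal vertex covers then so is the
set corresponding to `C̄ ∪ C̄'`. -/
theorem stmt_4 {n : ℕ} (G : SimpleGraph (Fin n ⊕ Fin n)) (hbip : Bip G)
    (hmatch : ∀ i, G.Adj (Sum.inl i) (Sum.inr i)) (hunm : Unmixed G)
    (C C' : Finset (Fin n ⊕ Fin n)) (hC : IsMinVC G C) (hC' : IsMinVC G C') :
    IsMinVC G (coverOf (xpart C ∪ xpart C')) := by
  have hCn := minVC_card G hbip hmatch hunm C hC
  have hC'n := minVC_card G hbip hmatch hunm C' hC'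
  set S := xpart C ∪ xpart C' with hS
  have hmemS : ∀ i : Fin n, i ∈ S ↔ Sum.inl i ∈ C ∨ Sum.inl i ∈ C' := by
    intro i; simp [hS, xpart]
  have key : ∀ i j : Fin n, G.Adj (Sum.inl i) (Sum.inr j) → i ∈ S ∨ j ∉ S := by
    intro i j hadj
    by_contra h
    push_neg at h
    obtain ⟨hi, hj⟩ := h
    rw [hmemS] at hi
    push_neg at hi
    rcases (hmemS j).1 hj with hjC | hjC
    · have : Sum.inr j ∈ C := (hC.1 hadj).resolve_left hi.1
      exact not_both G hmatch C hC.1 hCn j hjC this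
    · have : Sum.inr j ∈ C' := (hC'.1 hadj).resolve_left hi.2
      exact not_both G hmatch C' hC'.1 hC'n j hjC this
  constructor
  · intro u v huv
    cases u with
    | inl i => cases v with
      | inl j => exact absurd huv (hbip.1 _ _)
      | inr j =>
        rcases key i j huv with h | h
        · left; exact (mem_coverOf_inl S i).2 h
        · right; exact (mem_coverOf_inr S j).2 h
    | inr i => cases v with
      | inl j =>
        rcases key j i huv.symm with h | h
        · right; exact (mem_coverOf_inl S j).2 h
        · left; exact (mem_coverOf_inr S i).2 h
      | inr j => exact absurd huv (hbip.2 _ _)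
  · intro D hD hDvc
    have h1 := card_ge_of_VC G hmatch D hDvc
    have h2 := Finset.card_lt_card hD
    rw [card_coverOf] at h2; omega
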